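/- Let S : ℝ → ℝ be a 1-periodic, absolutely continuous function with absolutely integrable derivative. Define the discrete trigonometric Fourier coefficients θ̄_{j,p} = ∫₀¹ S(t) Ψ_{j,p}(t) dt where Ψ_{j,p}(t) = Σ_{l=1}^p φ_j(t_l) 1_{(t_{l-1}, t_l]}(t), t_l = l/p, and (φ_j) is the trigonometric basis. Then |θ̄_{1,p}| ≤ ‖S‖₁ and max_{2 ≤ j ≤ p} j |θ̄_{j,p}| ≤ 2√2 ‖S'‖₁, where ‖·‖₁ denotes the L¹[0,1] norm. -/

import Mathlib

open MeasureTheory intervalIntegral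

/-- The trigonometric basis on `[0,1]`: `φ₁ = 1`, `φ_j(x) = √2 cos(2π[j/2]x)` for even `j`,
`φ_j(x) = √2 sin(2π[j/2]x)` for odd `j`. -/
noncomputable def trigBasis (j : ℕ) (x : ℝ) : ℝ :=
  if j = 1 then 1
  else if j % 2 = 0 then Real.sqrt 2 * Real.cos (2 * Real.pi * ((j / 2 : ℕ) : ℝ) * x)
  else Real.sqrt 2 * Real.sin (2 * Real.pi * ((j / 2 : ℕ) : ℝ) * x)

/-- The step-function basis `Ψ_{j,p}(t) = Σ_{l=1}^p φ_j(t_l) 1_{(t_{l-1}, t_l]}(t)`, `t_l = l/p`. -/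
noncomputable def PsiStep (j p : ℕ) (t : ℝ) : ℝ :=
  ∑ l ∈ Finset.Icc 1 p,
    trigBasis j ((l:ℝ)/p) * Set.indicator (Set.Ioc (((l:ℝ) - 1)/p) ((l:ℝ)/p)) (fun _ => (1:ℝ)) t


lemma sum_cos_mul (θ : ℝ) (l : ℕ) :
    2 * Real.sin (θ/2) * ∑ m ∈ Finset.range l, Real.cos (((m:ℝ)+1)*θ)
      = Real.sin (((l:ℝ) + 1/2)*θ) - Real.sin (θ/2) := by
  induction l with
  | zero => rw [show ((0:ℕ):ℝ) + 1/2 = 1/2 by norm_num]; simp [mul_comm]; ring_nf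
  | succ n ih =>
    rw [Finset.sum_range_succ, mul_add, ih]
    have h : Real.sin ((((n:ℝ)+1) + 1/2)*θ) - Real.sin (((n:ℝ)+1/2)*θ)
        = 2 * Real.sin (θ/2) * Real.cos (((n:ℝ)+1)*θ) := by
      rw [Real.sin_sub_sin]; ring_nf
    push_cast
    linarith

lemma sum_sin_mul (θ : ℝ) (l : ℕ) :
    2 * Real.sin (θ/2) * ∑ m ∈ Finset.range l, Real.sin (((m:ℝ)+1)*θ)
      = Real.cos (θ/2) - Real.cos (((l:ℝ) + 1/2)*θ) := by
  induction l with
  | zero => rw [show ((0:ℕ):ℝ) + 1/2 = 1/2 by norm_num]; simp [mul_comm]; ring_nf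
  | succ n ih =>
    rw [Finset.sum_range_succ, mul_add, ih]
    have h : Real.cos (((n:ℝ)+1/2)*θ) - Real.cos ((((n:ℝ)+1) + 1/2)*θ)
        = 2 * Real.sin (θ/2) * Real.sin (((n:ℝ)+1)*θ) := by
      rw [Real.cos_sub_cos]
      ring_nf
      rw [show θ*(-1/2) = -(θ*(1/2)) by ring, Real.sin_neg]
      ring
    push_cast
    linarith


lemma abs_sum_cos_le {θ : ℝ} (hθ : 0 < Real.sin (θ/2)) (l : ℕ) :
    |∑ m ∈ Finset.range l, Real.cos (((m:ℝ)+1)*θ)| ≤ 1 / Real.sin (θ/2) := by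
  have h2 : |∑ m ∈ Finset.range l, Real.cos (((m:ℝ)+1)*θ)| * (2 * Real.sin (θ/2)) ≤ 2 := by
    rw [← abs_of_pos (by positivity : (0:ℝ) < 2 * Real.sin (θ/2)), ← abs_mul, mul_comm,
      sum_cos_mul]
    calc |Real.sin (((l:ℝ) + 1/2)*θ) - Real.sin (θ/2)|
        ≤ |Real.sin (((l:ℝ) + 1/2)*θ)| + |Real.sin (θ/2)| := abs_sub _ _
      _ ≤ 2 := by linarith [Real.abs_sin_le_one (((l:ℝ) + 1/2)*θ), Real.abs_sin_le_one (θ/2)]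
  rw [le_div_iff₀ hθ]
  linarith

lemma abs_sum_sin_le {θ : ℝ} (hθ : 0 < Real.sin (θ/2)) (l : ℕ) :
    |∑ m ∈ Finset.range l, Real.sin (((m:ℝ)+1)*θ)| ≤ 1 / Real.sin (θ/2) := by
  have h2 : |∑ m ∈ Finset.range l, Real.sin (((m:ℝ)+1)*θ)| * (2 * Real.sin (θ/2)) ≤ 2 := by
    rw [← abs_of_pos (by positivity : (0:ℝ) < 2 * Real.sin (θ/2)), ← abs_mul, mul_comm,
      sum_sin_mul]
    calc |Real.cos (θ/2) - Real.cos (((l:ℝ) + 1/2)*θ)|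
        ≤ |Real.cos (θ/2)| + |Real.cos (((l:ℝ) + 1/2)*θ)| := abs_sub _ _
      _ ≤ 2 := by linarith [Real.abs_cos_le_one (((l:ℝ) + 1/2)*θ), Real.abs_cos_le_one (θ/2)]
  rw [le_div_iff₀ hθ]
  linarith

lemma sum_cos_eq_zero {θ : ℝ} (hθ : 0 < Real.sin (θ/2)) {p : ℕ} {k : ℤ} (hpθ : (p:ℝ) * θ = 2 * Real.pi * k) :
    ∑ m ∈ Finset.range p, Real.cos (((m:ℝ)+1)*θ) = 0 := by
  have h := sum_cos_mul θ p
  have he : Real.sin (((p:ℝ) + 1/2)*θ) = Real.sin (θ/2) := by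
    rw [show ((p:ℝ) + 1/2)*θ = θ/2 + (p:ℝ)*θ by ring, hpθ,
      show θ/2 + 2 * Real.pi * k = θ/2 + k * (2*Real.pi) by ring, Real.sin_add_int_mul_two_pi]
  rw [he] at h
  have : 2 * Real.sin (θ/2) ≠ 0 := by positivity
  rw [sub_self] at h
  exact (mul_eq_zero.mp h).resolve_left this

lemma sum_sin_eq_zero {θ : ℝ} (hθ : 0 < Real.sin (θ/2)) {p : ℕ} {k : ℤ} (hpθ : (p:ℝ) * θ = 2 * Real.pi * k) :
    ∑ m ∈ Finset.range p, Real.sin (((m:ℝ)+1)*θ) = 0 := by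
  have h := sum_sin_mul θ p
  have he : Real.cos (((p:ℝ) + 1/2)*θ) = Real.cos (θ/2) := by
    rw [show ((p:ℝ) + 1/2)*θ = θ/2 + (p:ℝ)*θ by ring, hpθ,
      show θ/2 + 2 * Real.pi * k = θ/2 + k * (2*Real.pi) by ring, Real.cos_add_int_mul_two_pi]
  rw [he] at h
  have : 2 * Real.sin (θ/2) ≠ 0 := by positivity
  rw [sub_self] at h
  exact (mul_eq_zero.mp h).resolve_left this

lemma sum_Icc_one (p:ℕ) (f : ℕ → ℝ) : ∑ l ∈ Finset.Icc 1 p, f l = ∑ i ∈ Finset.range p, f (i+1) := by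
  rw [← Finset.Ico_add_one_right_eq_Icc, Finset.sum_Ico_eq_sum_range]
  simp [add_comm]


lemma integral_mul_psi (p j : ℕ) (hp : 0 < p) (S : ℝ → ℝ) (hS : Continuous S) :
    ∫ t in (0:ℝ)..1, S t * PsiStep j p t
      = ∑ l ∈ Finset.Icc 1 p, trigBasis j ((l:ℝ)/p) * ∫ t in (((l:ℝ)-1)/p)..((l:ℝ)/p), S t := by
  have hp0 : (0:ℝ) < p := Nat.cast_pos.mpr hp
  have hfun : (fun t => S t * PsiStep j p t)
      = fun t => ∑ l ∈ Finset.Icc 1 p,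
          trigBasis j ((l:ℝ)/p) * Set.indicator (Set.Ioc (((l:ℝ)-1)/p) ((l:ℝ)/p)) S t := by
    funext t
    unfold PsiStep
    rw [Finset.mul_sum]
    refine Finset.sum_congr rfl fun l _ => ?_
    by_cases h : t ∈ Set.Ioc (((l:ℝ)-1)/p) ((l:ℝ)/p)
    · simp only [Set.indicator_of_mem h]; ring
    · simp only [Set.indicator_of_notMem h]; ring
  rw [hfun, intervalIntegral.integral_finset_sum]
  · refine Finset.sum_congr rfl fun l hl => ?_
    obtain ⟨hl1, hlp⟩ := Finset.mem_Icc.mp hl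
    have hl1' : (1:ℝ) ≤ l := by exact_mod_cast hl1
    have h0a : (0:ℝ) ≤ ((l:ℝ)-1)/p := div_nonneg (by linarith) hp0.le
    have hab : ((l:ℝ)-1)/p ≤ (l:ℝ)/p := by gcongr; linarith
    have hb1 : ((l:ℝ))/p ≤ 1 := by
      rw [div_le_one hp0]; exact_mod_cast hlp
    rw [intervalIntegral.integral_const_mul]
    congr 1
    rw [intervalIntegral.integral_of_le zero_le_one, intervalIntegral.integral_of_le hab,
      MeasureTheory.setIntegral_indicator measurableSet_Ioc,
      Set.inter_eq_self_of_subset_right (Set.Ioc_subset_Ioc h0a hb1)]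
  · intro l hl
    apply IntervalIntegrable.const_mul
    rw [intervalIntegrable_iff_integrableOn_Ioc_of_le zero_le_one]
    exact (hS.integrableOn_Ioc).integrable_indicator measurableSet_Ioc


lemma sum_Bdiff_le (p : ℕ) (hp : 2 ≤ p) (S S' : ℝ → ℝ)
    (hderiv : ∀ x, HasDerivAt S (S' x) x)
    (hS'int : IntervalIntegrable S' volume 0 1) :
    ∑ i ∈ Finset.range (p-1),
      |(∫ t in (((i:ℝ)+1)/p)..(((i:ℝ)+2)/p), S t) - ∫ t in ((i:ℝ)/p)..(((i:ℝ)+1)/p), S t|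
      ≤ (∫ t in (0:ℝ)..1, |S' t|) / p := by
  have hScont : Continuous S := by
    rw [continuous_iff_continuousAt]; exact fun x => (hderiv x).continuousAt
  have hq : (0:ℝ) < p := by positivity
  have hpR : (2:ℝ) ≤ p := by exact_mod_cast hp
  have hp0a : (0:ℝ) ≤ ((p:ℝ)-1)/p := div_nonneg (by linarith) hq.le
  have habs : IntervalIntegrable (fun t => |S' t|) volume 0 1 := hS'int.abs
  set G : ℝ → ℝ := fun x => ∫ t in (0:ℝ)..x, |S' t| with hGdef
  have hGcont : ContinuousOn G (Set.Icc 0 1) := by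
    have := continuousOn_primitive_interval (a := (0:ℝ)) (b := 1) (μ := volume)
      (f := fun t => |S' t|) (by
        rw [Set.uIcc_of_le zero_le_one, integrableOn_Icc_iff_integrableOn_Ioc]
        exact (intervalIntegrable_iff_integrableOn_Ioc_of_le zero_le_one).mp habs)
    rwa [Set.uIcc_of_le zero_le_one] at this
  have hGint : ∀ a b : ℝ, 0 ≤ a → a ≤ b → b ≤ 1 → IntervalIntegrable G volume a b :=
    fun a b h1 h2 h3 => (hGcont.mono (by
      rw [Set.uIcc_of_le h2]; exact Set.Icc_subset_Icc h1 h3)).intervalIntegrable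
  have hsub : ∀ (f : ℝ → ℝ), IntervalIntegrable f volume 0 1 →
      ∀ a b : ℝ, 0 ≤ a → a ≤ b → b ≤ 1 → IntervalIntegrable f volume a b := by
    intro f hf a b h1 h2 h3
    exact hf.mono_set (Set.uIcc_subset_uIcc
      (by rw [Set.uIcc_of_le zero_le_one]; exact ⟨h1, h2.trans h3⟩)
      (by rw [Set.uIcc_of_le zero_le_one]; exact ⟨h1.trans h2, h3⟩))
  -- G is "monotone" on [0,1] and sub-differences equal integrals of |S'|
  have hGsub : ∀ a b : ℝ, 0 ≤ a → a ≤ b → b ≤ 1 → G b - G a = ∫ t in a..b, |S' t| := by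
    intro a b h1 h2 h3
    exact intervalIntegral.integral_interval_sub_left
      (hsub _ habs 0 b le_rfl (h1.trans h2) h3) (hsub _ habs 0 a le_rfl h1 (h2.trans h3))
  have hGmono : ∀ a b : ℝ, 0 ≤ a → a ≤ b → b ≤ 1 → G a ≤ G b := by
    intro a b h1 h2 h3
    have := hGsub a b h1 h2 h3
    have hnn : 0 ≤ ∫ t in a..b, |S' t| :=
      intervalIntegral.integral_nonneg h2 (fun u _ => abs_nonneg _)
    linarith
  have hG0 : G 0 = 0 := by simp [hGdef]
  -- pointwise bound
  have hptwise : ∀ t : ℝ, 0 ≤ t → t + 1/p ≤ 1 → |S (t + 1/p) - S t| ≤ G (t + 1/p) - G t := by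
    intro t h1 h2
    have ht2 : t ≤ t + 1/p := by
      have : (0:ℝ) < 1/p := by positivity
      linarith
    have hftc : ∫ u in t..(t + 1/p), S' u = S (t + 1/p) - S t :=
      intervalIntegral.integral_eq_sub_of_hasDerivAt (fun x _ => hderiv x)
        (hsub _ hS'int t (t + 1/p) h1 ht2 h2)
    rw [← hftc, hGsub t (t + 1/p) h1 ht2 h2]
    exact intervalIntegral.abs_integral_le_integral_abs ht2
  -- the shifted-difference function
  have hp1 : (1:ℝ)/p ≤ ((p:ℝ)-1)/p := by
    rw [div_le_div_iff₀ hq hq]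
    have : (2:ℝ) ≤ p := by exact_mod_cast hp
    nlinarith
  have hp2 : ((p:ℝ)-1)/p ≤ 1 := by
    rw [div_le_one hq]; linarith
  have hp3 : (0:ℝ) ≤ 1/p := by positivity
  have hHcont : ContinuousOn (fun t => G (t + 1/p) - G t) (Set.Icc 0 (((p:ℝ)-1)/p)) := by
    apply ContinuousOn.sub
    · have h6 : ((p:ℝ)-1)/p + 1/p = 1 := by field_simp; ring
      apply hGcont.comp (Continuous.continuousOn (by fun_prop))
      intro t ht
      exact ⟨by simp only []; linarith [ht.1, hp3], by simp only []; linarith [ht.2, h6]⟩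
    · exact hGcont.mono (Set.Icc_subset_Icc le_rfl hp2)
  -- step 1: term-wise bound
  have hterm : ∀ i ∈ Finset.range (p-1),
      |(∫ t in (((i:ℝ)+1)/p)..(((i:ℝ)+2)/p), S t) - ∫ t in ((i:ℝ)/p)..(((i:ℝ)+1)/p), S t|
        ≤ ∫ t in ((i:ℝ)/p)..(((i:ℝ)+1)/p), (G (t + 1/p) - G t) := by
    intro i hi
    have hi' : (i:ℝ) ≤ (p:ℝ) - 2 := by
      have := Finset.mem_range.mp hi
      have : (i:ℝ) + 1 ≤ (p:ℝ) - 1 := by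
        have h3 : i + 1 ≤ p - 1 := this
        have h4 : (i:ℝ) + 1 ≤ ((p-1:ℕ):ℝ) := by exact_mod_cast h3
        rwa [Nat.cast_sub (by omega), Nat.cast_one] at h4
      linarith
    have ha0 : (0:ℝ) ≤ (i:ℝ)/p := by positivity
    have hab : (i:ℝ)/p ≤ ((i:ℝ)+1)/p := by gcongr <;> linarith
    have hb1 : ((i:ℝ)+1)/p ≤ ((p:ℝ)-1)/p := by gcongr <;> linarith
    have hshift : (∫ t in (((i:ℝ)+1)/p)..(((i:ℝ)+2)/p), S t)
        = ∫ t in ((i:ℝ)/p)..(((i:ℝ)+1)/p), S (t + 1/p) := by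
      rw [intervalIntegral.integral_comp_add_right (fun u => S u) (1/p)]
      congr 1 <;> field_simp <;> ring
    rw [hshift, ← intervalIntegral.integral_sub
      (Continuous.intervalIntegrable (by fun_prop : Continuous fun t : ℝ => S (t + 1/↑p)) _ _)
      (hScont.intervalIntegrable _ _)]
    calc |∫ t in ((i:ℝ)/p)..(((i:ℝ)+1)/p), (S (t + 1/p) - S t)|
        ≤ ∫ t in ((i:ℝ)/p)..(((i:ℝ)+1)/p), |S (t + 1/p) - S t| :=
          intervalIntegral.abs_integral_le_integral_abs hab
      _ ≤ ∫ t in ((i:ℝ)/p)..(((i:ℝ)+1)/p), (G (t + 1/p) - G t) := by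
          apply intervalIntegral.integral_mono_on hab
          · exact (Continuous.intervalIntegrable (by fun_prop :
              Continuous fun t : ℝ => |S (t + 1/↑p) - S t|) _ _)
          · exact ((hHcont.mono (by
              rw [Set.uIcc_of_le hab]
              exact Set.Icc_subset_Icc ha0 hb1)).intervalIntegrable)
          · intro t ht
            exact hptwise t (le_trans ha0 ht.1) (by
              have := ht.2
              have h5 : t ≤ ((p:ℝ)-1)/p := le_trans this hb1
              have h6 : ((p:ℝ)-1)/p + 1/p = 1 := by field_simp; ring
              linarith)
  have h6 : ((p:ℝ)-1)/p + 1/p = 1 := by field_simp; ring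
  have hC1 : ContinuousOn (fun t => G (t + 1/p)) (Set.Icc 0 (((p:ℝ)-1)/p)) := by
    apply hGcont.comp (Continuous.continuousOn (by fun_prop))
    intro t ht
    exact ⟨by simp only []; linarith [ht.1, hp3], by simp only []; linarith [ht.2, h6]⟩
  have hC2 : ContinuousOn G (Set.Icc 0 (((p:ℝ)-1)/p)) := hGcont.mono (Set.Icc_subset_Icc le_rfl hp2)
  have hsum : ∑ i ∈ Finset.range (p-1), ∫ t in ((i:ℝ)/p)..(((i:ℝ)+1)/p), (G (t + 1/p) - G t)
      = ∫ t in (0:ℝ)..(((p:ℝ)-1)/p), (G (t + 1/p) - G t) := by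
    have key := intervalIntegral.sum_integral_adjacent_intervals (μ := volume)
      (a := fun i : ℕ => (i:ℝ)/p) (n := p-1)
      (f := fun t => G (t + 1/p) - G t) (by
        intro k hk
        have hk' : (k:ℝ) + 1 ≤ (p:ℝ) - 1 := by
          have h4 : (k:ℝ) + 1 ≤ ((p-1:ℕ):ℝ) := by exact_mod_cast Nat.succ_le_of_lt hk
          rwa [Nat.cast_sub (by omega), Nat.cast_one] at h4
        have hab : (k:ℝ)/p ≤ ((k:ℝ)+1)/p := by gcongr; linarith
        have : IntervalIntegrable (fun t => G (t + 1/p) - G t) volume ((k:ℝ)/p) (((k:ℝ)+1)/p) :=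
          (hHcont.mono (by
            rw [Set.uIcc_of_le hab]
            exact Set.Icc_subset_Icc (by positivity) (by gcongr))).intervalIntegrable
        convert this using 2
        push_cast
        ring)
    push_cast [Nat.cast_sub (show 1 ≤ p by omega)] at key
    simp only [zero_div, Nat.cast_one] at key
    rw [← key]
  have hIa : IntervalIntegrable (fun t => G (t + 1/p)) volume 0 (((p:ℝ)-1)/p) :=
    (hC1.mono (by rw [Set.uIcc_of_le (hp3.trans hp1)])).intervalIntegrable
  have hIb : IntervalIntegrable G volume 0 (((p:ℝ)-1)/p) :=
    (hC2.mono (by rw [Set.uIcc_of_le (hp3.trans hp1)])).intervalIntegrable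
  have hshift2 : ∫ t in (0:ℝ)..(((p:ℝ)-1)/p), G (t + 1/p) = ∫ t in (1/(p:ℝ))..1, G t := by
    rw [intervalIntegral.integral_comp_add_right G (1/p), zero_add, h6]
  have hadd1 : (∫ t in (1/(p:ℝ))..(((p:ℝ)-1)/p), G t) + ∫ t in (((p:ℝ)-1)/p)..1, G t
      = ∫ t in (1/(p:ℝ))..1, G t :=
    intervalIntegral.integral_add_adjacent_intervals (hGint _ _ hp3 hp1 hp2) (hGint _ _ (hp3.trans hp1) hp2 le_rfl)
  have hadd2 : (∫ t in (0:ℝ)..(1/(p:ℝ)), G t) + ∫ t in (1/(p:ℝ))..(((p:ℝ)-1)/p), G t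
      = ∫ t in (0:ℝ)..(((p:ℝ)-1)/p), G t :=
    intervalIntegral.integral_add_adjacent_intervals (hGint _ _ le_rfl hp3 (hp1.trans hp2)) (hGint _ _ hp3 hp1 hp2)
  have h9 : ∫ t in (((p:ℝ)-1)/p)..1, G t ≤ (1/p) * G 1 := by
    have hmono : ∀ t ∈ Set.Icc (((p:ℝ)-1)/p) 1, G t ≤ G 1 :=
      fun t ht => hGmono t 1 (le_trans hp0a ht.1) ht.2 le_rfl
    calc ∫ t in (((p:ℝ)-1)/p)..1, G t ≤ ∫ t in (((p:ℝ)-1)/p)..1, G 1 :=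
          intervalIntegral.integral_mono_on hp2 (hGint _ _ hp0a hp2 le_rfl)
            intervalIntegrable_const hmono
      _ = (1 - ((p:ℝ)-1)/p) * G 1 := by rw [intervalIntegral.integral_const, smul_eq_mul]
      _ = (1/p) * G 1 := by congr 1; field_simp; ring
  have h10 : 0 ≤ ∫ t in (0:ℝ)..(1/(p:ℝ)), G t := by
    apply intervalIntegral.integral_nonneg hp3
    intro u hu
    have := hGmono 0 u le_rfl hu.1 (hu.2.trans (hp1.trans hp2))
    linarith [hG0.symm ▸ this]
  have hfinal : G 1 = ∫ t in (0:ℝ)..1, |S' t| := rfl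
  calc ∑ i ∈ Finset.range (p-1),
      |(∫ t in (((i:ℝ)+1)/p)..(((i:ℝ)+2)/p), S t) - ∫ t in ((i:ℝ)/p)..(((i:ℝ)+1)/p), S t|
      ≤ ∑ i ∈ Finset.range (p-1), ∫ t in ((i:ℝ)/p)..(((i:ℝ)+1)/p), (G (t + 1/p) - G t) :=
        Finset.sum_le_sum hterm
    _ = ∫ t in (0:ℝ)..(((p:ℝ)-1)/p), (G (t + 1/p) - G t) := hsum
    _ = (∫ t in (0:ℝ)..(((p:ℝ)-1)/p), G (t + 1/p)) - ∫ t in (0:ℝ)..(((p:ℝ)-1)/p), G t :=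
        intervalIntegral.integral_sub hIa hIb
    _ = (∫ t in (((p:ℝ)-1)/p)..1, G t) - ∫ t in (0:ℝ)..(1/(p:ℝ)), G t := by
        rw [hshift2]; linarith [hadd1, hadd2]
    _ ≤ (1/p) * G 1 - 0 := sub_le_sub h9 h10
    _ = (∫ t in (0:ℝ)..1, |S' t|) / p := by rw [hfinal]; ring

/-- for a 1-periodic absolutely continuous `S` with absolutely integrable
derivative `S'`, the coefficients `θ̄_{j,p} = ∫₀¹ S Ψ_{j,p}` satisfy `|θ̄_{1,p}| ≤ ‖S‖₁`
and `j |θ̄_{j,p}| ≤ 2√2 ‖S'‖₁` for `2 ≤ j ≤ p`. -/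
theorem stmt2 (p : ℕ) (hp : 2 ≤ p) (S S' : ℝ → ℝ)
    (hper : Function.Periodic S 1)
    (hderiv : ∀ x, HasDerivAt S (S' x) x)
    (hS'int : IntervalIntegrable S' volume 0 1) :
    (|∫ t in (0:ℝ)..1, S t * PsiStep 1 p t| ≤ ∫ t in (0:ℝ)..1, |S t|) ∧
    (∀ j : ℕ, 2 ≤ j → j ≤ p →
      (j:ℝ) * |∫ t in (0:ℝ)..1, S t * PsiStep j p t|
        ≤ 2 * Real.sqrt 2 * ∫ t in (0:ℝ)..1, |S' t|) := by
  have hScont : Continuous S := by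
    rw [continuous_iff_continuousAt]; exact fun x => (hderiv x).continuousAt
  have hq : (0:ℝ) < p := by positivity
  constructor
  · -- Part 1
    rw [integral_mul_psi p 1 (by omega) S hScont]
    have h1 : ∀ l ∈ Finset.Icc 1 p,
        trigBasis 1 ((l:ℝ)/p) * (∫ t in (((l:ℝ)-1)/p)..((l:ℝ)/p), S t)
          = ∫ t in (((l:ℝ)-1)/p)..((l:ℝ)/p), S t := by
      intro l _; simp [trigBasis]
    rw [Finset.sum_congr rfl h1, sum_Icc_one]
    have key := intervalIntegral.sum_integral_adjacent_intervals (μ := volume)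
      (a := fun i : ℕ => (i:ℝ)/p) (n := p) (f := S)
      (fun k _ => hScont.intervalIntegrable _ _)
    simp only [Nat.cast_zero, zero_div] at key
    have ep : ((p:ℝ))/p = 1 := div_self hq.ne'
    rw [ep] at key
    have key2 : ∑ i ∈ Finset.range p, ∫ t in ((((i+1:ℕ)):ℝ)-1)/p..(((i+1:ℕ)):ℝ)/p, S t
        = ∫ t in (0:ℝ)..1, S t := by
      rw [← key]
      apply Finset.sum_congr rfl
      intro i _
      congr 1
      push_cast
      ring
    rw [key2]
    exact intervalIntegral.abs_integral_le_integral_abs zero_le_one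
  · -- Part 2
    intro j hj hjp
    set k := j / 2 with hkdef
    have hk1 : 1 ≤ k := by omega
    have h2k : 2 * k ≤ p := by omega
    have hkp : k < p := by omega
    have hkR : (1:ℝ) ≤ k := by exact_mod_cast hk1
    have h2kR : (2:ℝ) * k ≤ p := by exact_mod_cast h2k
    have hkpR : (k:ℝ) < p := by exact_mod_cast hkp
    set θ : ℝ := 2 * Real.pi * k / p with hθdef
    have hθ2 : θ/2 = Real.pi * k / p := by rw [hθdef]; ring
    have hθs : 0 < Real.sin (θ/2) := by
      rw [hθ2]
      apply Real.sin_pos_of_pos_of_lt_pi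
      · have := Real.pi_pos; positivity
      · rw [div_lt_iff₀ hq]
        nlinarith [Real.pi_pos]
    have hsin : 2 * (k:ℝ) / p ≤ Real.sin (θ/2) := by
      rw [hθ2]
      have hx0 : (0:ℝ) ≤ Real.pi * k / p := by have := Real.pi_pos; positivity
      have hx1 : Real.pi * k / p ≤ Real.pi / 2 := by
        rw [div_le_div_iff₀ hq two_pos]
        nlinarith [Real.pi_pos]
      have := Real.mul_le_sin hx0 hx1
      have he : 2 / Real.pi * (Real.pi * k / p) = 2 * k / p := by
        field_simp
      linarith [he ▸ this]
    have hpθ : (p:ℝ) * θ = 2 * Real.pi * ((k:ℤ):ℝ) := by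
      rw [hθdef]; push_cast; field_simp
    set c : ℕ → ℝ := fun m => trigBasis j ((m:ℝ)/p) with hcdef
    set B : ℕ → ℝ := fun l => ∫ t in (((l:ℝ)-1)/p)..((l:ℝ)/p), S t with hBdef
    have hmain : ∫ t in (0:ℝ)..1, S t * PsiStep j p t
        = ∑ i ∈ Finset.range p, B (i+1) * c (i+1) := by
      rw [integral_mul_psi p j (by omega) S hScont, sum_Icc_one]
      exact Finset.sum_congr rfl fun i _ => mul_comm _ _
    have hj1 : j ≠ 1 := by omega
    have key : (∑ i ∈ Finset.range p, c (i+1) = 0) ∧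
        (∀ l : ℕ, |∑ i ∈ Finset.range l, c (i+1)| ≤ Real.sqrt 2 / Real.sin (θ/2)) := by
      rcases Nat.even_or_odd j with hpar | hpar
      · have hjev : j % 2 = 0 := Nat.even_iff.mp hpar
        have hform : ∀ l : ℕ, ∑ i ∈ Finset.range l, c (i+1)
            = Real.sqrt 2 * ∑ m ∈ Finset.range l, Real.cos (((m:ℝ)+1)*θ) := by
          intro l
          rw [Finset.mul_sum]
          apply Finset.sum_congr rfl
          intro i _
          simp only [hcdef, trigBasis, if_neg hj1, if_pos hjev, ← hkdef]
          congr 1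
          rw [hθdef]
          push_cast
          ring
        constructor
        · rw [hform, sum_cos_eq_zero hθs hpθ, mul_zero]
        · intro l
          rw [hform, abs_mul, abs_of_nonneg (Real.sqrt_nonneg 2), div_eq_mul_one_div]
          exact mul_le_mul_of_nonneg_left (abs_sum_cos_le hθs l) (Real.sqrt_nonneg 2)
      · have hjev : ¬ (j % 2 = 0) := by
          have := Nat.odd_iff.mp hpar; omega
        have hform : ∀ l : ℕ, ∑ i ∈ Finset.range l, c (i+1)
            = Real.sqrt 2 * ∑ m ∈ Finset.range l, Real.sin (((m:ℝ)+1)*θ) := by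
          intro l
          rw [Finset.mul_sum]
          apply Finset.sum_congr rfl
          intro i _
          simp only [hcdef, trigBasis, if_neg hj1, if_neg hjev, ← hkdef]
          congr 1
          rw [hθdef]
          push_cast
          ring
        constructor
        · rw [hform, sum_sin_eq_zero hθs hpθ, mul_zero]
        · intro l
          rw [hform, abs_mul, abs_of_nonneg (Real.sqrt_nonneg 2), div_eq_mul_one_div]
          exact mul_le_mul_of_nonneg_left (abs_sum_sin_le hθs l) (Real.sqrt_nonneg 2)
    obtain ⟨hC0, hCb⟩ := key
    -- Abel summation
    have abel := Finset.sum_range_by_parts (fun i => B (i+1)) (fun i => c (i+1)) p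
    simp only [smul_eq_mul, hC0, mul_zero, zero_sub] at abel
    rw [hmain, abel]
    -- bound
    have hBsum : ∑ i ∈ Finset.range (p-1), |B (i+2) - B (i+1)|
        ≤ (∫ t in (0:ℝ)..1, |S' t|) / p := by
      have hb := sum_Bdiff_le p hp S S' hderiv hS'int
      have : ∀ i ∈ Finset.range (p-1), |B (i+2) - B (i+1)|
          = |(∫ t in (((i:ℝ)+1)/p)..(((i:ℝ)+2)/p), S t) - ∫ t in ((i:ℝ)/p)..(((i:ℝ)+1)/p), S t| := by
        intro i _
        simp only [hBdef]
        congr 2 <;> push_cast <;> congr 1 <;> ring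
      rw [Finset.sum_congr rfl this]
      exact hb
    have hI : (0:ℝ) ≤ ∫ t in (0:ℝ)..1, |S' t| :=
      intervalIntegral.integral_nonneg zero_le_one (fun u _ => abs_nonneg _)
    set I := ∫ t in (0:ℝ)..1, |S' t| with hIdef
    have hstep : |-∑ i ∈ Finset.range (p-1), (B (i+1+1) - B (i+1)) * ∑ m ∈ Finset.range (i+1), c (m+1)|
        ≤ (Real.sqrt 2 / Real.sin (θ/2)) * (I / p) := by
      rw [abs_neg]
      calc |∑ i ∈ Finset.range (p-1), (B (i+1+1) - B (i+1)) * ∑ m ∈ Finset.range (i+1), c (m+1)|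
          ≤ ∑ i ∈ Finset.range (p-1), |(B (i+1+1) - B (i+1)) * ∑ m ∈ Finset.range (i+1), c (m+1)| :=
            Finset.abs_sum_le_sum_abs _ _
        _ ≤ ∑ i ∈ Finset.range (p-1), |B (i+2) - B (i+1)| * (Real.sqrt 2 / Real.sin (θ/2)) := by
            apply Finset.sum_le_sum
            intro i _
            rw [abs_mul]
            exact mul_le_mul_of_nonneg_left (hCb (i+1)) (abs_nonneg _)
        _ = (∑ i ∈ Finset.range (p-1), |B (i+2) - B (i+1)|) * (Real.sqrt 2 / Real.sin (θ/2)) := by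
            rw [← Finset.sum_mul]
        _ ≤ (I / p) * (Real.sqrt 2 / Real.sin (θ/2)) := by
            apply mul_le_mul_of_nonneg_right hBsum
            positivity
        _ = (Real.sqrt 2 / Real.sin (θ/2)) * (I / p) := mul_comm _ _
    -- final arithmetic
    have hbound2 : (Real.sqrt 2 / Real.sin (θ/2)) * (I / p) ≤ Real.sqrt 2 * I / (2 * k) := by
      have h1 : Real.sqrt 2 / Real.sin (θ/2) ≤ Real.sqrt 2 / (2 * k / p) :=
        div_le_div_of_nonneg_left (Real.sqrt_nonneg 2) (by positivity) hsin
      have h2 : Real.sqrt 2 / (2 * k / p) * (I / p) = Real.sqrt 2 * I / (2 * k) := by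
        field_simp
      calc (Real.sqrt 2 / Real.sin (θ/2)) * (I / p)
          ≤ Real.sqrt 2 / (2 * k / p) * (I / p) :=
            mul_le_mul_of_nonneg_right h1 (by positivity)
        _ = Real.sqrt 2 * I / (2 * k) := h2
    have hjle : (j:ℝ) ≤ 4 * k := by
      have : j ≤ 4 * k := by omega
      exact_mod_cast this
    have habs := le_trans hstep hbound2
    calc (j:ℝ) * |-∑ i ∈ Finset.range (p-1), (B (i+1+1) - B (i+1)) * ∑ m ∈ Finset.range (i+1), c (m+1)|
        ≤ (j:ℝ) * (Real.sqrt 2 * I / (2 * k)) := by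
          apply mul_le_mul_of_nonneg_left habs (by positivity)
      _ ≤ 2 * Real.sqrt 2 * I := by
          rw [mul_div_assoc', div_le_iff₀ (by positivity : (0:ℝ) < 2 * k)]
          nlinarith [Real.sqrt_nonneg 2, mul_nonneg (Real.sqrt_nonneg 2) hI]
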